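/- arXiv:2605.30588 — 3 statements merged into one kernel-verified Lean document; each statement's English description precedes it below -/
import Mathlib

section
/- Let {K_l} be operators on a finite-dimensional Hilbert space satisfying the completeness relation Σ_l K_l† K_l = I, and suppose that for a unit vector ψ and a unit vector φ we have Σ_l K_l |ψ⟩⟨ψ| K_l† = |φ⟩⟨φ|. Then for each l there exists a complex scalar c_l with K_l ψ = c_l φ, and Σ_l |c_l|² = 1. -/
variable {H : Type*} [NormedAddCommGroup H] [InnerProductSpace ℂ H] [FiniteDimensional ℂ H]

/-- The rank-one operator `|u⟩⟨v| : x ↦ ⟨v, x⟩ u`. -/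
noncomputable def outer (u v : H) : H →ₗ[ℂ] H where
  toFun x := (inner ℂ v x : ℂ) • u
  map_add' x y := by simp [inner_add_right, add_smul]
  map_smul' c x := by simp [inner_smul_right, mul_smul]

theorem kraus_branches_proportional {ι : Type*} [Fintype ι]
    (K : ι → (H →ₗ[ℂ] H))
    (hcomplete : ∑ l, LinearMap.adjoint (K l) ∘ₗ K l = LinearMap.id)
    (ψ φ : H) (hψ : ‖ψ‖ = 1) (hφ : ‖φ‖ = 1)
    (hmap : ∑ l, K l ∘ₗ outer ψ ψ ∘ₗ LinearMap.adjoint (K l) = outer φ φ) :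
    ∃ c : ι → ℂ, (∀ l, K l ψ = c l • φ) ∧ ∑ l, ‖c l‖ ^ 2 = 1 := by
  classical
  have key : ∀ x : H, ∑ l, (inner ℂ (K l ψ) x : ℂ) • K l ψ = (inner ℂ φ x : ℂ) • φ := by
    intro x
    have h := congrArg (fun (T : H →ₗ[ℂ] H) => T x) hmap
    simpa [LinearMap.sum_apply, outer, LinearMap.comp_apply,
      LinearMap.adjoint_inner_left, LinearMap.adjoint_inner_right, inner_smul_right] using h
  -- For x ⊥ φ, each ⟨x, K l ψ⟩ = 0
  have horth : ∀ x : H, (inner ℂ φ x : ℂ) = 0 → ∀ l, (inner ℂ x (K l ψ) : ℂ) = 0 := by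
    intro x hx l
    have h := congrArg (fun v => (inner ℂ x v : ℂ)) (key x)
    simp only [inner_sum, inner_smul_right, hx, zero_smul, inner_zero_right] at h
    have h2 : ∑ m, (Complex.normSq (inner ℂ x (K m ψ) : ℂ) : ℂ) = 0 := by
      rw [← h]
      refine Finset.sum_congr rfl fun m _ => ?_
      rw [← inner_conj_symm x (K m ψ)]
      simp [Complex.normSq_eq_conj_mul_self, mul_comm]
    have h3 : ∑ m, Complex.normSq (inner ℂ x (K m ψ) : ℂ) = 0 := by
      exact_mod_cast h2
    have h4 : Complex.normSq (inner ℂ x (K l ψ) : ℂ) = 0 := by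
      have := (Finset.sum_eq_zero_iff_of_nonneg
        (fun m _ => Complex.normSq_nonneg _)).mp h3 l (Finset.mem_univ l)
      exact this
    exact Complex.normSq_eq_zero.mp h4
  -- Each K l ψ lies in span of φ
  have hspan : ∀ l, K l ψ ∈ (ℂ ∙ φ) := by
    intro l
    rw [← Submodule.orthogonal_orthogonal (ℂ ∙ φ)]
    rw [Submodule.mem_orthogonal]
    intro x hx
    exact horth x (hx φ (Submodule.mem_span_singleton_self φ)) l
  choose c hc using fun l => Submodule.mem_span_singleton.mp (hspan l)
  refine ⟨c, fun l => (hc l).symm, ?_⟩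
  -- completeness gives the norm sum
  have h := congrArg (fun (T : H →ₗ[ℂ] H) => (inner ℂ ψ (T ψ) : ℂ)) hcomplete
  simp only [LinearMap.sum_apply, LinearMap.comp_apply, LinearMap.id_apply,
    inner_sum, LinearMap.adjoint_inner_right] at h
  have hψ2 : (inner ℂ ψ ψ : ℂ) = 1 := by
    rw [inner_self_eq_norm_sq_to_K, hψ]; norm_num
  rw [hψ2] at h
  have hterm : ∀ l, (inner ℂ (K l ψ) (K l ψ) : ℂ) = (‖c l‖ ^ 2 : ℝ) := by
    intro l
    rw [← hc l, inner_smul_left, inner_smul_right, inner_self_eq_norm_sq_to_K, hφ]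
    rw [← mul_assoc, ← Complex.normSq_eq_conj_mul_self]
    push_cast [Complex.normSq_eq_norm_sq]
    ring
  rw [Finset.sum_congr rfl (fun l _ => hterm l)] at h
  exact_mod_cast h
end

section
/- Let H = ⊕_{α=1}^m H_α with orthogonal projections Π_α, let ψ = Σ_α √p_α ψ̂_α and φ = Σ_β √q_β φ̂_β be unit vectors with ψ̂_α ∈ H_α, φ̂_β ∈ H_β unit vectors, and p, q probability vectors with all entries positive. Suppose p = Σ_l λ_l S_{π_l} q for weights λ_l ≥ 0 summing to 1 and permutations π_l of {1,...,m}. Define A_l = √λ_l Σ_α √(q_{π_l(α)}/p_α) |φ̂_{π_l(α)}⟩⟨ψ̂_α|. Then A_l ψ = √λ_l φ for every l, and consequently Σ_l A_l |ψ⟩⟨ψ| A_l† = |φ⟩⟨φ|. -/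
variable {H : Type*} [NormedAddCommGroup H] [InnerProductSpace ℂ H] [FiniteDimensional ℂ H]

theorem kraus_construction_achieves_transformation {m : ℕ} {ι : Type*} [Fintype ι]
    (ψhat φhat : Fin m → H)
    (hψon : Orthonormal ℂ ψhat) (hφon : Orthonormal ℂ φhat)
    (p q : Fin m → ℝ)
    (hp : ∀ α, 0 < p α) (hq : ∀ β, 0 < q β)
    (hpsum : ∑ α, p α = 1) (hqsum : ∑ β, q β = 1)
    (lam : ι → ℝ) (hlam : ∀ l, 0 ≤ lam l) (hlamsum : ∑ l, lam l = 1)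
    (π : ι → Equiv.Perm (Fin m))
    (hmix : ∀ α, p α = ∑ l, lam l * q (π l α))
    (ψ φ : H)
    (hψ : ψ = ∑ α, (Real.sqrt (p α) : ℂ) • ψhat α)
    (hφ : φ = ∑ β, (Real.sqrt (q β) : ℂ) • φhat β)
    (A : ι → (H →ₗ[ℂ] H))
    (hA : ∀ l, A l = (Real.sqrt (lam l) : ℂ) •
      ∑ α, (Real.sqrt (q (π l α) / p α) : ℂ) • outer (φhat (π l α)) (ψhat α)) :
    (∀ l, A l ψ = (Real.sqrt (lam l) : ℂ) • φ) ∧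
      ∑ l, A l ∘ₗ outer ψ ψ ∘ₗ LinearMap.adjoint (A l) = outer φ φ := by
  have key : ∀ l, A l ψ = (Real.sqrt (lam l) : ℂ) • φ := by
    intro l
    rw [hA, hψ, hφ]
    simp only [LinearMap.smul_apply, LinearMap.sum_apply]
    congr 1
    rw [← Equiv.sum_comp (π l) (fun β => (Real.sqrt (q β) : ℂ) • φhat β)]
    refine Finset.sum_congr rfl fun α _ => ?_
    simp only [LinearMap.smul_apply, outer, LinearMap.coe_mk, AddHom.coe_mk]
    rw [hψon.inner_right_fintype, smul_smul, ← Complex.ofReal_mul]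
    congr 2
    rw [Real.sqrt_div (hq (π l α)).le, div_mul_cancel₀]
    exact Real.sqrt_ne_zero'.mpr (hp α)
  refine ⟨key, ?_⟩
  have hterm : ∀ l, A l ∘ₗ outer ψ ψ ∘ₗ LinearMap.adjoint (A l)
      = ((lam l : ℝ) : ℂ) • outer φ φ := by
    intro l
    ext x
    simp only [LinearMap.comp_apply, LinearMap.smul_apply, outer, LinearMap.coe_mk,
      AddHom.coe_mk]
    rw [map_smul, key, LinearMap.adjoint_inner_right (A l), key]
    rw [inner_smul_left, smul_smul, smul_smul]
    congr 1
    rw [Complex.conj_ofReal]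
    rw [show ((Real.sqrt (lam l) : ℂ) * inner ℂ φ x) * (Real.sqrt (lam l) : ℂ)
        = ((Real.sqrt (lam l) * Real.sqrt (lam l) : ℝ) : ℂ) * inner ℂ φ x by push_cast; ring]
    rw [Real.mul_self_sqrt (hlam l)]
  rw [Finset.sum_congr rfl fun l _ => hterm l, ← Finset.sum_smul, ← Complex.ofReal_sum,
    hlamsum, Complex.ofReal_one, one_smul]
end

section
/- Let Π_1, ..., Π_m be mutually orthogonal projections summing to the identity and let A be an operator such that for each α there exists β(α) with Π_{β(α)} A Π_α = A Π_α (i.e., A maps block α into block β(α)), where α ↦ β(α) is injective. Then Δ(A X A†) = A Δ(X) A† for every operator X, where Δ(X) = Σ_α Π_α X Π_α. -/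
variable {H : Type*} [NormedAddCommGroup H] [InnerProductSpace ℂ H] [FiniteDimensional ℂ H]

/-- The block dephasing map `Δ(ρ) = Σ_α Π_α ρ Π_α`. -/
noncomputable def blockDephase {m : ℕ} (P : Fin m → (H →ₗ[ℂ] H)) (ρ : H →ₗ[ℂ] H) :
    H →ₗ[ℂ] H :=
  ∑ α, P α ∘ₗ ρ ∘ₗ P α

theorem block_to_block_operator_dephasing_covariant {m : ℕ}
    (P : Fin m → (H →ₗ[ℂ] H))
    (hadj : ∀ α, LinearMap.adjoint (P α) = P α)
    (horth : ∀ α β, P α ∘ₗ P β = if α = β then P α else 0)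
    (hsum : ∑ α, P α = LinearMap.id)
    (A : H →ₗ[ℂ] H) (b : Fin m → Fin m) (hb : Function.Injective b)
    (hblock : ∀ α, P (b α) ∘ₗ A ∘ₗ P α = A ∘ₗ P α) :
    ∀ X : H →ₗ[ℂ] H,
      blockDephase P (A ∘ₗ X ∘ₗ LinearMap.adjoint A) =
        A ∘ₗ blockDephase P X ∘ₗ LinearMap.adjoint A := by
  intro X
  have h1 : ∀ γ α, P γ * (A * P α) = if γ = b α then A * P α else 0 := by
    intro γ α
    have h := hblock α
    have h' := horth γ (b α)
    simp only [← Module.End.mul_eq_comp] at h h'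
    calc P γ * (A * P α) = P γ * (P (b α) * (A * P α)) := by rw [← mul_assoc, h, mul_assoc]
    _ = (P γ * P (b α)) * (A * P α) := by rw [mul_assoc]
    _ = _ := by
        rw [h']
        split
        · next hγ => rw [hγ, h]
        · simp
  have key : ∀ γ, P γ * A = ∑ α, if γ = b α then A * P α else 0 := by
    intro γ
    have : P γ * A = ∑ α, P γ * (A * P α) := by
      rw [← Finset.mul_sum, ← Finset.mul_sum, hsum]
      simp [Module.End.mul_eq_comp]
    rw [this]
    exact Finset.sum_congr rfl fun α _ => h1 γ α
  have key' : ∀ γ, LinearMap.adjoint A * P γ =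
      ∑ α, if γ = b α then P α * LinearMap.adjoint A else 0 := by
    intro γ
    have h2 := congrArg (LinearMap.adjoint (𝕜 := ℂ)) (key γ)
    simp only [Module.End.mul_eq_comp] at h2
    simp only [LinearMap.adjoint_comp, map_sum,
      apply_ite (LinearMap.adjoint (𝕜 := ℂ)), map_zero, hadj] at h2
    simp only [← Module.End.mul_eq_comp] at h2
    exact h2
  simp only [blockDephase, ← Module.End.mul_eq_comp]
  calc ∑ γ, P γ * (A * (X * LinearMap.adjoint A) * P γ)
      = ∑ γ, (P γ * A) * (X * (LinearMap.adjoint A * P γ)) := by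
        apply Finset.sum_congr rfl; intros; simp only [mul_assoc]
    _ = ∑ γ, ∑ α, ∑ α', (if γ = b α then A * P α else 0) * X *
          (if γ = b α' then P α' * LinearMap.adjoint A else 0) := by
        apply Finset.sum_congr rfl; intro γ _
        rw [key, key', Finset.sum_mul]
        apply Finset.sum_congr rfl; intro α _
        rw [Finset.mul_sum, Finset.mul_sum]
        apply Finset.sum_congr rfl; intros; simp only [mul_assoc]
    _ = ∑ α, ∑ α', ∑ γ, (if γ = b α then A * P α else 0) * X *
          (if γ = b α' then P α' * LinearMap.adjoint A else 0) := by
        rw [Finset.sum_comm]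
        apply Finset.sum_congr rfl; intros; rw [Finset.sum_comm]
    _ = ∑ α, (A * P α) * X * (P α * LinearMap.adjoint A) := by
        apply Finset.sum_congr rfl; intro α _
        simp only [ite_mul, mul_ite, zero_mul, mul_zero]
        simp [Finset.sum_ite_eq', hb.eq_iff, mul_assoc]
    _ = A * (∑ α, P α * (X * P α)) * LinearMap.adjoint A := by
        rw [Finset.mul_sum, Finset.sum_mul]
        apply Finset.sum_congr rfl; intros; simp only [mul_assoc]
end
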